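/- Let fₙ : ℝ → ℝ be a nondecreasing sequence of C¹ functions, each solving a(x)fₙ' + H(x,fₙ) = λₙ with λₙ → λ, uniformly bounded by a constant K, where a : ℝ → (0,∞) is continuous and H is continuous. Then f := sup_n fₙ is a C¹ solution of a(x)f' + H(x,f) = λ on ℝ, and fₙ → f in the local C¹ topology. -/

import Mathlib

open Filter

lemma my_dini {fn : ℕ → ℝ → ℝ} {f : ℝ → ℝ} {s : Set ℝ} (hs : IsCompact s)
    (hfc : ContinuousOn f s) (hfnc : ∀ n, ContinuousOn (fn n) s)
    (hmono : ∀ x, Monotone fun n => fn n x)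
    (hlim : ∀ x ∈ s, Tendsto (fun n => fn n x) atTop (nhds (f x))) :
    TendstoUniformlyOn fn f atTop s := by
  rw [Metric.tendstoUniformlyOn_iff]
  intro ε hε
  have hle : ∀ n, ∀ x ∈ s, fn n x ≤ f x := fun n x hx =>
    (hmono x).ge_of_tendsto (hlim x hx) n
  have : CompactSpace s := isCompact_iff_compactSpace.mp hs
  set U : ℕ → Set s := fun n => {x : s | f x - fn n x < ε} with hU
  have hUopen : ∀ n, IsOpen (U n) := by
    intro n
    exact isOpen_lt ((hfc.restrict).sub ((hfnc n).restrict)) continuous_const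
  have hcover : (Set.univ : Set s) ⊆ ⋃ n, U n := by
    intro x _
    have h1 : Tendsto (fun n => f (x : ℝ) - fn n x) atTop (nhds (f (x : ℝ) - f (x : ℝ))) :=
      tendsto_const_nhds.sub (hlim x x.2)
    rw [sub_self] at h1
    obtain ⟨n, hn⟩ := (h1.eventually_lt_const hε).exists
    exact Set.mem_iUnion.2 ⟨n, hn⟩
  obtain ⟨t, ht⟩ := isCompact_univ.elim_finite_subcover U hUopen hcover
  filter_upwards [eventually_ge_atTop (t.sup id)] with n hn x hx
  obtain ⟨m, hm, hxm⟩ := Set.mem_iUnion₂.1 (ht (Set.mem_univ (⟨x, hx⟩ : s)))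
  have hmn : m ≤ n := le_trans (Finset.le_sup (f := id) hm) hn
  have h2 : f x - fn n x < ε :=
    lt_of_le_of_lt (by have := hmono x hmn; simpa using sub_le_sub_left this (f x)) hxm
  rw [Real.dist_eq, abs_of_nonneg (sub_nonneg.2 (hle n x hx))]
  exact h2

lemma key_unif
    (a : ℝ → ℝ) (H : ℝ → ℝ → ℝ) (fn : ℕ → ℝ → ℝ) (lamn : ℕ → ℝ) (lam K : ℝ)
    (ha_cont : Continuous a) (ha_pos : ∀ x, 0 < a x)
    (hH_cont : Continuous fun q : ℝ × ℝ => H q.1 q.2)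
    (hmono : ∀ n x, fn n x ≤ fn (n+1) x)
    (hC1 : ∀ n, ContDiff ℝ 1 (fn n))
    (hsol : ∀ n x, a x * deriv (fn n) x + H x (fn n x) = lamn n)
    (hlam : Tendsto lamn atTop (nhds lam))
    (hbdd : ∀ n x, |fn n x| ≤ K) (r : ℝ) (hr : 0 ≤ r) :
    TendstoUniformlyOn (fun n x => fn n x) (fun x => ⨆ n, fn n x) atTop (Set.Icc (-r) r) ∧
    TendstoUniformlyOn (fun n => deriv (fn n))
      (fun x => (lam - H x (⨆ n, fn n x)) / a x) atTop (Set.Icc (-r) r) := by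
  set F : ℝ → ℝ := fun x => ⨆ n, fn n x with hF
  set s : Set ℝ := Set.Icc (-r) r with hs
  have hne : s.Nonempty := ⟨0, by constructor <;> linarith⟩
  have hm : ∀ x, Monotone fun n => fn n x := fun x =>
    monotone_nat_of_le_succ fun n => hmono n x
  have hbddA : ∀ x, BddAbove (Set.range fun n => fn n x) := fun x =>
    ⟨K, Set.forall_mem_range.2 fun n => (abs_le.1 (hbdd n x)).2⟩
  have htd : ∀ x, Tendsto (fun n => fn n x) atTop (nhds (F x)) := fun x =>
    tendsto_atTop_ciSup (hm x) (hbddA x)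
  have hK0 : (0:ℝ) ≤ K := le_trans (abs_nonneg _) (hbdd 0 0)
  have hFb : ∀ x, F x ∈ Set.Icc (-K) K := fun x =>
    ⟨le_trans (abs_le.1 (hbdd 0 x)).1 (le_ciSup (hbddA x) 0),
      ciSup_le fun n => (abs_le.1 (hbdd n x)).2⟩
  obtain ⟨x₀, hx₀s, hx₀⟩ := isCompact_Icc.exists_isMinOn hne ha_cont.continuousOn
  set ε₀ : ℝ := a x₀ with hε₀def
  have hε₀ : 0 < ε₀ := ha_pos x₀
  have ha_ge : ∀ x ∈ s, ε₀ ≤ a x := fun x hx => hx₀ hx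
  set Q : Set (ℝ × ℝ) := s ×ˢ Set.Icc (-K) K with hQdef
  have hQ : IsCompact Q := isCompact_Icc.prod isCompact_Icc
  obtain ⟨C, hC⟩ := hQ.exists_bound_of_continuousOn hH_cont.continuousOn
  have hC0 : 0 ≤ C := le_trans (norm_nonneg _)
    (hC (0, 0) (by refine ⟨⟨?_, ?_⟩, ?_, ?_⟩ <;> simp <;> linarith))
  obtain ⟨L, hL⟩ := (hlam.abs).bddAbove_range
  have hLn : ∀ n, |lamn n| ≤ L := fun n => hL (Set.mem_range_self n)
  have hL0 : 0 ≤ L := le_trans (abs_nonneg _) (hLn 0)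
  have hderiv_eq : ∀ n x, deriv (fn n) x = (lamn n - H x (fn n x)) / a x := by
    intro n x
    rw [eq_div_iff (ha_pos x).ne']
    have := hsol n x
    linarith [hsol n x, mul_comm (deriv (fn n) x) (a x)]
  set M : ℝ := (L + C) / ε₀ with hMdef
  have hM0 : 0 ≤ M := div_nonneg (by linarith) hε₀.le
  have hmemQ : ∀ n x, x ∈ s → (x, fn n x) ∈ Q := fun n x hx =>
    ⟨hx, ⟨(abs_le.1 (hbdd n x)).1, (abs_le.1 (hbdd n x)).2⟩⟩
  have hM : ∀ n, ∀ x ∈ s, |deriv (fn n) x| ≤ M := by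
    intro n x hx
    rw [hderiv_eq, abs_div, abs_of_pos (ha_pos x)]
    apply div_le_div₀ (by linarith) _ hε₀ (ha_ge x hx)
    calc |lamn n - H x (fn n x)| ≤ |lamn n| + |H x (fn n x)| := abs_sub _ _
      _ ≤ L + C := add_le_add (hLn n)
          (by simpa [Real.norm_eq_abs] using hC (x, fn n x) (hmemQ n x hx))
  have hfl : ∀ n, ∀ x ∈ s, ∀ y ∈ s, |fn n y - fn n x| ≤ M * |y - x| := by
    intro n x hx y hy
    have := (convex_Icc (-r) r).norm_image_sub_le_of_norm_deriv_le
      (fun z _ => ((hC1 n).differentiable one_ne_zero) z)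
      (fun z hz => by simpa [Real.norm_eq_abs] using hM n z hz) hx hy
    simpa [Real.norm_eq_abs] using this
  have hFl : ∀ x ∈ s, ∀ y ∈ s, |F y - F x| ≤ M * |y - x| := by
    intro x hx y hy
    have ht : Tendsto (fun n => |fn n y - fn n x|) atTop (nhds |F y - F x|) :=
      ((htd y).sub (htd x)).abs
    exact le_of_tendsto ht (Eventually.of_forall fun n => hfl n x hx y hy)
  have hFc : ContinuousOn F s := by
    have hlip : LipschitzOnWith (Real.toNNReal M) F s := by
      rw [lipschitzOnWith_iff_dist_le_mul]
      intro x hx y hy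
      rw [Real.dist_eq, Real.dist_eq]
      calc |F x - F y| ≤ M * |x - y| := hFl y hy x hx
        _ = (Real.toNNReal M : ℝ) * |x - y| := by rw [Real.coe_toNNReal M hM0]
    exact hlip.continuousOn
  have hA : TendstoUniformlyOn (fun n x => fn n x) F atTop s :=
    my_dini isCompact_Icc hFc (fun n => (hC1 n).continuous.continuousOn) hm
      (fun x _ => htd x)
  refine ⟨hA, ?_⟩
  rw [Metric.tendstoUniformlyOn_iff]
  intro ε hε
  have hQu : UniformContinuousOn (fun q : ℝ × ℝ => H q.1 q.2) Q :=
    hQ.uniformContinuousOn_of_continuous hH_cont.continuousOn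
  rw [Metric.uniformContinuousOn_iff] at hQu
  obtain ⟨δ, hδ, hδ'⟩ := hQu (ε * ε₀ / 2) (by positivity)
  have e1 : ∀ᶠ n in atTop, dist (lamn n) lam < ε * ε₀ / 2 :=
    (Metric.tendsto_nhds.1 hlam) _ (by positivity)
  have e2 := (Metric.tendstoUniformlyOn_iff.1 hA) δ hδ
  filter_upwards [e1, e2] with n h1 h2 x hx
  have hH2 : dist (H x (F x)) (H x (fn n x)) < ε * ε₀ / 2 := by
    apply hδ' (x, F x) ⟨hx, hFb x⟩ (x, fn n x) (hmemQ n x hx)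
    rw [Prod.dist_eq]
    exact max_lt (by simpa using hδ) (h2 x hx)
  have hnum : |(lam - H x (F x)) - (lamn n - H x (fn n x))| < ε * ε₀ := by
    calc |(lam - H x (F x)) - (lamn n - H x (fn n x))|
        = |(lam - lamn n) + (H x (fn n x) - H x (F x))| := by ring_nf
      _ ≤ |lam - lamn n| + |H x (fn n x) - H x (F x)| := abs_add_le _ _
      _ < ε * ε₀ / 2 + ε * ε₀ / 2 := by
          apply add_lt_add
          · rw [abs_sub_comm]; exact h1
          · rw [abs_sub_comm]; exact hH2
      _ = ε * ε₀ := by ring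
  rw [Real.dist_eq, hderiv_eq, div_sub_div_same, abs_div, abs_of_pos (ha_pos x)]
  rw [div_lt_iff₀ (ha_pos x)]
  calc |(lam - H x (F x)) - (lamn n - H x (fn n x))| < ε * ε₀ := hnum
    _ ≤ ε * a x := mul_le_mul_of_nonneg_left (ha_ge x hx) hε.le

/-- Monotone stability: if `fₙ` is a nondecreasing sequence of `C¹` solutions of
`a fₙ' + H(x, fₙ) = λₙ` with `λₙ → λ`, uniformly bounded by `K`, `a > 0`
continuous and `H` continuous, then `f := sup_n fₙ` is a `C¹` solution of
`a f' + H(x,f) = λ` and `fₙ → f` in the local `C¹` topology. -/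
theorem monotone_stability_ode
    (a : ℝ → ℝ) (H : ℝ → ℝ → ℝ) (fn : ℕ → ℝ → ℝ) (lamn : ℕ → ℝ) (lam K : ℝ)
    (ha_cont : Continuous a) (ha_pos : ∀ x, 0 < a x)
    (hH_cont : Continuous fun q : ℝ × ℝ => H q.1 q.2)
    (hmono : ∀ n x, fn n x ≤ fn (n+1) x)
    (hC1 : ∀ n, ContDiff ℝ 1 (fn n))
    (hsol : ∀ n x, a x * deriv (fn n) x + H x (fn n x) = lamn n)
    (hlam : Tendsto lamn atTop (nhds lam))
    (hbdd : ∀ n x, |fn n x| ≤ K) :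
    ContDiff ℝ 1 (fun x => ⨆ n, fn n x) ∧
      (∀ x, a x * deriv (fun y => ⨆ n, fn n y) x + H x (⨆ n, fn n x) = lam) ∧
      ∀ r : ℝ,
        TendstoUniformlyOn (fun n x => fn n x) (fun x => ⨆ n, fn n x) atTop
          (Set.Icc (-r) r) ∧
        TendstoUniformlyOn (fun n => deriv (fn n))
          (deriv fun x => ⨆ n, fn n x) atTop (Set.Icc (-r) r) := by
  set F : ℝ → ℝ := fun x => ⨆ n, fn n x with hF
  have hm : ∀ x, Monotone fun n => fn n x := fun x =>
    monotone_nat_of_le_succ fun n => hmono n x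
  have hbddA : ∀ x, BddAbove (Set.range fun n => fn n x) := fun x =>
    ⟨K, Set.forall_mem_range.2 fun n => (abs_le.1 (hbdd n x)).2⟩
  have htd : ∀ x, Tendsto (fun n => fn n x) atTop (nhds (F x)) := fun x =>
    tendsto_atTop_ciSup (hm x) (hbddA x)
  have hkey := key_unif a H fn lamn lam K ha_cont ha_pos hH_cont hmono hC1 hsol hlam hbdd
  have hF_has : ∀ x, HasDerivAt F ((lam - H x (F x)) / a x) x := by
    intro x
    obtain ⟨hA, hB⟩ := hkey (|x| + 1) (by positivity)
    have hx : x ∈ Set.Ioo (-(|x| + 1)) (|x| + 1) :=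
      ⟨by linarith [neg_abs_le x], by linarith [le_abs_self x]⟩
    exact hasDerivAt_of_tendstoUniformlyOn isOpen_Ioo (hB.mono Set.Ioo_subset_Icc_self)
      (Eventually.of_forall fun n y _ => (((hC1 n).differentiable one_ne_zero) y).hasDerivAt)
      (fun y _ => htd y) hx
  have hdiff : Differentiable ℝ F := fun x => (hF_has x).differentiableAt
  have hderivF : deriv F = fun x => (lam - H x (F x)) / a x :=
    funext fun x => (hF_has x).deriv
  refine ⟨?_, ?_, ?_⟩
  · refine contDiff_one_iff_deriv.2 ⟨hdiff, ?_⟩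
    rw [hderivF]
    exact (continuous_const.sub (hH_cont.comp (continuous_id.prodMk hdiff.continuous))).div
      ha_cont fun x => (ha_pos x).ne'
  · intro x
    rw [hderivF]
    show a x * ((lam - H x (F x)) / a x) + H x (F x) = lam
    rw [mul_div_cancel₀ _ (ha_pos x).ne']
    ring
  · intro r
    obtain ⟨hA, hB⟩ := hkey |r| (abs_nonneg r)
    have hsub : Set.Icc (-r) r ⊆ Set.Icc (-|r|) |r| :=
      Set.Icc_subset_Icc (neg_le_neg (le_abs_self r)) (le_abs_self r)
    exact ⟨hA.mono hsub, by rw [hderivF]; exact hB.mono hsub⟩
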